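/- Let A be a transposed Poisson algebra and B a subalgebra of A contained in A^A (so with trivial bracket). For any B-module M, the tensor product A ⊗_B M is well-defined with Lie A-action a'⊳(a⊗m) = {a',a}⊗m; i.e., for b ∈ B the elements {a',ab}⊗m and {a',a}⊗(b·m) agree in A⊗_B M. -/
import Mathlib


open TensorProduct

/-- A transposed Poisson algebra structure on a commutative unital `k`-algebra `A`:
a Lie bracket satisfying the transposed Leibniz rule `2a{b,c} = {ab,c} + {b,ac}`. -/
structure TPA (k A : Type*) [Field k] [CharZero k] [CommRing A] [Algebra k A] where
  br : A →ₗ[k] A →ₗ[k] A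
  skew : ∀ a b, br a b = - br b a
  jacobi : ∀ a b c, br a (br b c) = br (br a b) c + br b (br a c)
  leibniz : ∀ a b c, 2 * a * br b c = br (a * b) c + br b (a * c)

/-- The transposed Poisson center `A^A = {b | b{a,a'} = {ba,a'} for all a,a'}`. -/
def TPA.center {k A : Type*} [Field k] [CharZero k] [CommRing A] [Algebra k A]
    (P : TPA k A) : Set A := {b | ∀ a a', b * P.br a a' = P.br (b * a) a'}

set_option synthInstance.maxHeartbeats 1000000 in
theorem tensor_over_center_subalgebra_balanced {k A : Type*} [Field k]
    [CharZero k] [CommRing A] [Algebra k A] (P : TPA k A) (B : Subalgebra k A)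
    (hB : ∀ b : B, (b : A) ∈ P.center) (M : Type*) [AddCommGroup M]
    [Module B M] :
    ∀ (b : B) (a a' : A) (m : M),
      (P.br a' (a * (b : A))) ⊗ₜ[B] m = (P.br a' a) ⊗ₜ[B] (b • m) := by
  intro b a a' m
  have key : P.br a' (a * (b : A)) = (b : A) * P.br a' a := by
    rw [P.skew a' (a * (b : A)), mul_comm a (b : A), ← hB b a a',
      P.skew a a', mul_neg, neg_neg]
  have : P.br a' (a * (b : A)) = b • P.br a' a := by
    rw [key]; rfl
  rw [this, ← TensorProduct.smul_tmul', TensorProduct.tmul_smul]
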